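/- Let M = [[A, b],[cᵀ, 0]] be a singular (n+1)×(n+1) matrix where A is invertible with A⁻¹ ≤ 0 and b, c ≤ 0 are vectors in ℝⁿ. Then the group inverse M^# exists, i.e., rank(M²) = rank(M). -/

import Mathlib

open Matrix

section aux

variable {n : ℕ}

private def Pmat (n : ℕ) : Matrix (Fin n) (Fin n ⊕ Fin 1) ℝ :=
  (1 : Matrix (Fin n ⊕ Fin 1) (Fin n ⊕ Fin 1) ℝ).submatrix Sum.inl id

private def Qmat (n : ℕ) : Matrix (Fin n ⊕ Fin 1) (Fin n) ℝ :=
  (1 : Matrix (Fin n ⊕ Fin 1) (Fin n ⊕ Fin 1) ℝ).submatrix id Sum.inl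

private lemma PMQ (M : Matrix (Fin n ⊕ Fin 1) (Fin n ⊕ Fin 1) ℝ) :
    Pmat n * M * Qmat n = M.submatrix Sum.inl Sum.inl := by
  ext i j
  simp [Pmat, Qmat, Matrix.mul_apply, Matrix.one_apply, Finset.sum_ite_eq]

private lemma rank_ge_of_block (M : Matrix (Fin n ⊕ Fin 1) (Fin n ⊕ Fin 1) ℝ)
    (h : IsUnit (M.submatrix Sum.inl Sum.inl).det) : n ≤ M.rank := by
  have h1 : (M.submatrix Sum.inl Sum.inl).rank = n := by
    rw [Matrix.rank_of_isUnit _ ((Matrix.isUnit_iff_isUnit_det _).2 h), Fintype.card_fin]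
  calc n = (Pmat n * M * Qmat n).rank := by rw [PMQ, h1]
    _ ≤ (M * Qmat n).rank := by
        rw [Matrix.mul_assoc]; exact Matrix.rank_mul_le_right _ _
    _ ≤ M.rank := Matrix.rank_mul_le_left _ _

end aux

/-- For a singular `M = [[A, b],[cᵀ, 0]]` with `A` invertible, `A⁻¹ ≤ 0`, `b, c ≤ 0`,
the group inverse of `M` exists, i.e. `rank (M²) = rank M`. -/
theorem stmt_2 (n : ℕ) (A : Matrix (Fin n) (Fin n) ℝ)
    (hAinv : IsUnit A.det)
    (hAneg : ∀ i j, A⁻¹ i j ≤ 0)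
    (b c : Fin n → ℝ) (hb : ∀ i, b i ≤ 0) (hc : ∀ i, c i ≤ 0)
    (M : Matrix (Fin n ⊕ Fin 1) (Fin n ⊕ Fin 1) ℝ)
    (hM : M = Matrix.fromBlocks A (fun i _ => b i) (fun _ j => c j) 0)
    (hsing : c ⬝ᵥ (A⁻¹ *ᵥ b) = 0) :
    (M * M).rank = M.rank := by
  classical
  have hBcol : (fun (i : Fin n) (_ : Fin 1) => b i) = Matrix.replicateCol (Fin 1) b := rfl
  have hCrow : (fun (_ : Fin 1) (j : Fin n) => c j) = Matrix.replicateRow (Fin 1) c := rfl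
  -- step 1 : rank M ≤ n, from det M = 0
  have : Invertible A := A.invertibleOfIsUnitDet hAinv
  have hdetM : M.det = 0 := by
    rw [hM, hBcol, hCrow, Matrix.det_fromBlocks₁₁, invOf_eq_nonsing_inv]
    have h0 : ((0 : Matrix (Fin 1) (Fin 1) ℝ) -
        Matrix.replicateRow (Fin 1) c * A⁻¹ * Matrix.replicateCol (Fin 1) b).det = 0 := by
      rw [Matrix.det_fin_one]
      simp only [Matrix.sub_apply, Matrix.zero_apply, zero_sub]
      rw [Matrix.mul_assoc]
      have h1 : (Matrix.replicateRow (Fin 1) c * (A⁻¹ * Matrix.replicateCol (Fin 1) b)) 0 0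
          = c ⬝ᵥ (A⁻¹ *ᵥ b) := by
        simp [Matrix.mul_apply, Matrix.replicateRow, Matrix.replicateCol, dotProduct,
          Matrix.mulVec, Finset.mul_sum]
      rw [h1, hsing, neg_zero]
    rw [h0, mul_zero]
  have hrank_le : M.rank ≤ n := by
    obtain ⟨v, hv0, hv⟩ := (Matrix.exists_mulVec_eq_zero_iff).2 hdetM
    have hker : 0 < Module.finrank ℝ (LinearMap.ker M.mulVecLin) := by
      rw [Module.finrank_pos_iff]
      exact ⟨⟨⟨v, by simpa [Matrix.mulVecLin] using hv⟩, 0, by simpa using hv0⟩⟩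
    have hrn := LinearMap.finrank_range_add_finrank_ker M.mulVecLin
    rw [Module.finrank_fintype_fun_eq_card, Fintype.card_sum, Fintype.card_fin,
      Fintype.card_fin] at hrn
    have hr : M.rank = Module.finrank ℝ (LinearMap.range M.mulVecLin) := rfl
    omega
  -- step 2 : n ≤ rank M
  have hrankM_ge : n ≤ M.rank := by
    apply rank_ge_of_block
    have hsub : M.submatrix Sum.inl Sum.inl = A := by rw [hM]; rfl
    rw [hsub]; exact hAinv
  -- step 3 : rank (M*M) ≤ rank M
  have hle : (M * M).rank ≤ M.rank := Matrix.rank_mul_le_left _ _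
  -- step 4 : n ≤ rank (M*M)
  have hge : n ≤ (M * M).rank := by
    apply rank_ge_of_block
    have hblock : (M * M).submatrix Sum.inl Sum.inl
        = A * A + Matrix.replicateCol (Fin 1) b * Matrix.replicateRow (Fin 1) c := by
      rw [hM, hBcol, hCrow, Matrix.fromBlocks_multiply]
      ext i j
      simp [Matrix.mul_apply, Matrix.replicateCol, Matrix.replicateRow]
    rw [hblock]
    have hAA : IsUnit (A * A).det := by rw [Matrix.det_mul]; exact hAinv.mul hAinv
    have h1 : (A * A) *ᵥ ((A * A)⁻¹ *ᵥ b) = b := by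
      rw [Matrix.mulVec_mulVec, Matrix.mul_nonsing_inv _ hAA, Matrix.one_mulVec]
    have hfac : A * A + Matrix.replicateCol (Fin 1) b * Matrix.replicateRow (Fin 1) c
        = (A * A) * (1 + Matrix.replicateCol (Fin 1) ((A * A)⁻¹ *ᵥ b) * Matrix.replicateRow (Fin 1) c) := by
      rw [Matrix.mul_add, Matrix.mul_one, ← Matrix.mul_assoc, ← Matrix.replicateCol_mulVec, h1]
    rw [hfac, Matrix.det_mul]; erw [Matrix.det_one_add_replicateCol_mul_replicateRow (ι := Fin 1) ((A * A)⁻¹ *ᵥ b) c]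
    apply hAA.mul
    have hinv2 : (A * A)⁻¹ *ᵥ b = A⁻¹ *ᵥ (A⁻¹ *ᵥ b) := by
      rw [Matrix.mul_inv_rev, ← Matrix.mulVec_mulVec]
    rw [hinv2]
    have hw : ∀ i, 0 ≤ (A⁻¹ *ᵥ b) i := by
      intro i
      simp only [Matrix.mulVec, dotProduct]
      exact Finset.sum_nonneg fun j _ => by nlinarith [hAneg i j, hb j]
    have hu : ∀ i, (A⁻¹ *ᵥ (A⁻¹ *ᵥ b)) i ≤ 0 := by
      intro i
      simp only [Matrix.mulVec, dotProduct]
      exact Finset.sum_nonpos fun j _ => mul_nonpos_of_nonpos_of_nonneg (hAneg i j) (hw j)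
    have hd : 0 ≤ c ⬝ᵥ (A⁻¹ *ᵥ (A⁻¹ *ᵥ b)) := by
      rw [dotProduct]
      exact Finset.sum_nonneg fun i _ => by nlinarith [hc i, hu i]
    have hpos : (0:ℝ) < 1 + c ⬝ᵥ (A⁻¹ *ᵥ (A⁻¹ *ᵥ b)) := by linarith
    exact isUnit_iff_ne_zero.2 (ne_of_gt hpos)
  omega
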